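/- For every odd prime p and every k in {0, 1, ..., p-1}, the Zagier number Z_k = sum over j from 0 to k of C(k,j) * C(2j,j) * C(2(k-j), k-j) satisfies Z_k ≡ legendreSym p (-1) * 32^k * Z_{p-1-k} (mod p). -/
import Mathlib

/-- The Zagier numbers `Z_n = ∑_{j=0}^n C(n,j) C(2j,j) C(2(n-j), n-j)`. -/
def zagierZ (n : ℕ) : ℤ :=
  ∑ j ∈ Finset.range (n + 1),
    (n.choose j : ℤ) * ((2 * j).choose j : ℤ) * ((2 * (n - j)).choose (n - j) : ℤ)

namespace ZagierAux

def Zt (n j : ℕ) : ℤ :=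
  (n.choose j : ℤ) * ((2 * j).choose j : ℤ) * ((2 * (n - j)).choose (n - j) : ℤ)

lemma zagierZ_eq (n : ℕ) : zagierZ n = ∑ j ∈ Finset.range (n + 1), Zt n j := rfl

def Gc (n j : ℕ) : ℤ :=
  2 * (j : ℤ) * (2 * ((n : ℤ) + 1) * j - (2 * n + 1) * (n + 2)) * ((n + 1).choose (j - 1) : ℤ)
    * ((2 * j).choose j : ℤ) * (catalan (n + 1 - j) : ℤ)

lemma Gc_zero (n : ℕ) : Gc n 0 = 0 := by simp [Gc]

lemma step0 (a : ℕ) :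
    ((a : ℤ) + 2) ^ 2 * Zt (a + 2) 0 - 4 * (3 * (a : ℤ) ^ 2 + 9 * a + 7) * Zt (a + 1) 0
      + 32 * ((a : ℤ) + 1) ^ 2 * Zt a 0 = Gc a 1 - Gc a 0 := by
  have F3 := Nat.succ_mul_centralBinom_succ a
  have F4 := Nat.succ_mul_centralBinom_succ (a + 1)
  have F6 := succ_mul_catalan_eq_centralBinom a
  simp only [Nat.centralBinom_eq_two_mul_choose, show a + 1 + 1 = a + 2 by omega] at F3 F4 F6
  simp only [Zt, Gc, Nat.sub_zero, Nat.choose_zero_right, Nat.cast_one, one_mul, mul_one,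
    Nat.mul_zero, Nat.choose_self, Nat.add_sub_cancel, Nat.cast_ofNat, Nat.cast_zero, mul_zero,
    zero_mul, sub_zero]
  norm_num
  have ha1 : ((a : ℚ) + 1) ≠ 0 := by positivity
  have ha2 : ((a : ℚ) + 2) ≠ 0 := by positivity
  have d4 : (((2 * (a + 2)).choose (a + 2) : ℕ) : ℚ)
      = 2 * (2 * ((a : ℚ) + 1) + 1) * (((2 * (a + 1)).choose (a + 1) : ℕ) : ℚ) / ((a : ℚ) + 2) := by
    rw [eq_div_iff ha2]; rw [mul_comm]; exact_mod_cast F4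
  have d3 : (((2 * (a + 1)).choose (a + 1) : ℕ) : ℚ)
      = 2 * (2 * (a : ℚ) + 1) * (((2 * a).choose a : ℕ) : ℚ) / ((a : ℚ) + 1) := by
    rw [eq_div_iff ha1]; rw [mul_comm]; exact_mod_cast F3
  have d6 : ((catalan a : ℕ) : ℚ) = (((2 * a).choose a : ℕ) : ℚ) / ((a : ℚ) + 1) := by
    rw [eq_div_iff ha1]; rw [mul_comm]; exact_mod_cast F6
  qify
  rw [d4, d3, d6]
  field_simp
  ring

lemma step1 (i a : ℕ) :
    (((i + 1 + a : ℕ) : ℤ) + 2) ^ 2 * Zt (i + 1 + a + 2) (i + 1)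
      - 4 * (3 * ((i + 1 + a : ℕ) : ℤ) ^ 2 + 9 * ((i + 1 + a : ℕ) : ℤ) + 7) * Zt (i + 1 + a + 1) (i + 1)
      + 32 * (((i + 1 + a : ℕ) : ℤ) + 1) ^ 2 * Zt (i + 1 + a) (i + 1)
      = Gc (i + 1 + a) (i + 1 + 1) - Gc (i + 1 + a) (i + 1) := by
  have F1 := Nat.choose_mul_succ_eq (i + 1 + a) (i + 1)
  have F2 := Nat.choose_mul_succ_eq (i + 1 + a + 1) (i + 1)
  have F8 := Nat.choose_succ_right_eq (i + 1 + a + 1) i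
  have F3 := Nat.succ_mul_centralBinom_succ a
  have F4 := Nat.succ_mul_centralBinom_succ (a + 1)
  have F5 := Nat.succ_mul_centralBinom_succ (i + 1)
  have F6 := succ_mul_catalan_eq_centralBinom a
  have F7 := succ_mul_catalan_eq_centralBinom (a + 1)
  simp only [Nat.centralBinom_eq_two_mul_choose, show a + 1 + 1 = a + 2 by omega,
    show i + 1 + a + 1 - (i + 1) = a + 1 by omega,
    show i + 1 + a + 1 + 1 = i + 1 + a + 2 by omega,
    show i + 1 + a + 2 - (i + 1) = a + 2 by omega,
    show i + 1 + a + 1 - i = a + 2 by omega] at F1 F2 F8 F3 F4 F5 F6 F7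
  simp only [Zt, Gc, show i + 1 + a - (i + 1) = a by omega,
    show i + 1 + a + 1 - (i + 1) = a + 1 by omega,
    show i + 1 + a + 2 - (i + 1) = a + 2 by omega,
    show i + 1 + a + 1 - (i + 1 + 1) = a by omega,
    show i + 1 + 1 - 1 = i + 1 by omega, show i + 1 - 1 = i by omega]
  have ha1 : ((a : ℚ) + 1) ≠ 0 := by positivity
  have ha2 : ((a : ℚ) + 2) ≠ 0 := by positivity
  have hi2 : ((i : ℚ) + 1 + 1) ≠ 0 := by positivity
  have d2 : (((i + 1 + a + 2).choose (i + 1) : ℕ) : ℚ)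
      = (((i + 1 + a + 1).choose (i + 1) : ℕ) : ℚ) * ((i : ℚ) + 1 + a + 2) / ((a : ℚ) + 2) := by
    have q : (((i + 1 + a + 1).choose (i + 1) : ℕ) : ℚ) * ((i : ℚ) + 1 + a + 2)
        = (((i + 1 + a + 2).choose (i + 1) : ℕ) : ℚ) * ((a : ℚ) + 2) := by exact_mod_cast F2
    rw [eq_div_iff ha2]; linear_combination -q
  have d8 : (((i + 1 + a + 1).choose i : ℕ) : ℚ)
      = (((i + 1 + a + 1).choose (i + 1) : ℕ) : ℚ) * ((i : ℚ) + 1) / ((a : ℚ) + 2) := by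
    rw [eq_div_iff ha2]; exact_mod_cast F8.symm
  have d1 : (((i + 1 + a + 1).choose (i + 1) : ℕ) : ℚ)
      = (((i + 1 + a).choose (i + 1) : ℕ) : ℚ) * ((i : ℚ) + 1 + a + 1) / ((a : ℚ) + 1) := by
    have q : (((i + 1 + a).choose (i + 1) : ℕ) : ℚ) * ((i : ℚ) + 1 + a + 1)
        = (((i + 1 + a + 1).choose (i + 1) : ℕ) : ℚ) * ((a : ℚ) + 1) := by exact_mod_cast F1
    rw [eq_div_iff ha1]; linear_combination -q
  have d4 : (((2 * (a + 2)).choose (a + 2) : ℕ) : ℚ)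
      = 2 * (2 * ((a : ℚ) + 1) + 1) * (((2 * (a + 1)).choose (a + 1) : ℕ) : ℚ) / ((a : ℚ) + 2) := by
    rw [eq_div_iff ha2, mul_comm]; exact_mod_cast F4
  have d7 : ((catalan (a + 1) : ℕ) : ℚ)
      = (((2 * (a + 1)).choose (a + 1) : ℕ) : ℚ) / ((a : ℚ) + 2) := by
    rw [eq_div_iff ha2, mul_comm]; exact_mod_cast F7
  have d3 : (((2 * (a + 1)).choose (a + 1) : ℕ) : ℚ)
      = 2 * (2 * (a : ℚ) + 1) * (((2 * a).choose a : ℕ) : ℚ) / ((a : ℚ) + 1) := by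
    rw [eq_div_iff ha1, mul_comm]; exact_mod_cast F3
  have d6 : ((catalan a : ℕ) : ℚ) = (((2 * a).choose a : ℕ) : ℚ) / ((a : ℚ) + 1) := by
    rw [eq_div_iff ha1, mul_comm]; exact_mod_cast F6
  have d5 : (((2 * (i + 1 + 1)).choose (i + 1 + 1) : ℕ) : ℚ)
      = 2 * (2 * ((i : ℚ) + 1) + 1) * (((2 * (i + 1)).choose (i + 1) : ℕ) : ℚ) / ((i : ℚ) + 1 + 1) := by
    rw [eq_div_iff hi2, mul_comm]; exact_mod_cast F5
  qify
  rw [d2, d8, d1, d4, d7, d3, d6, d5]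
  field_simp
  ring


lemma step (n j : ℕ) (h : j ≤ n) :
    ((n : ℤ) + 2) ^ 2 * Zt (n + 2) j - 4 * (3 * (n : ℤ) ^ 2 + 9 * (n : ℤ) + 7) * Zt (n + 1) j
      + 32 * ((n : ℤ) + 1) ^ 2 * Zt n j = Gc n (j + 1) - Gc n j := by
  rcases j with _ | i
  · exact step0 n
  · obtain ⟨a, rfl⟩ : ∃ a, n = i + 1 + a := ⟨n - (i + 1), by omega⟩
    exact step1 i a

lemma boundary (n : ℕ) :
    Gc n (n + 1) + ((n : ℤ) + 2) ^ 2 * (Zt (n + 2) (n + 1) + Zt (n + 2) (n + 2))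
      - 4 * (3 * (n : ℤ) ^ 2 + 9 * (n : ℤ) + 7) * Zt (n + 1) (n + 1) = 0 := by
  have F4 := Nat.succ_mul_centralBinom_succ (n + 1)
  simp only [Nat.centralBinom_eq_two_mul_choose, show n + 1 + 1 = n + 2 by omega] at F4
  simp only [Zt, Gc, Nat.add_sub_cancel, Nat.sub_self, Nat.choose_self, Nat.choose_succ_self_right,
    Nat.choose_zero_right, Nat.mul_zero, Nat.cast_one, one_mul, mul_one, catalan_zero,
    show n + 2 - (n + 1) = 1 by omega, show n + 1 - (n + 1) = 0 by omega,
    show n + 1 + 1 - (n + 1) = 1 by omega, show n + 1 + 1 = n + 2 by omega]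
  norm_num
  have hn2 : ((n : ℚ) + 2) ≠ 0 := by positivity
  have d4 : (((2 * (n + 2)).choose (n + 2) : ℕ) : ℚ)
      = 2 * (2 * ((n : ℚ) + 1) + 1) * (((2 * (n + 1)).choose (n + 1) : ℕ) : ℚ) / ((n : ℚ) + 2) := by
    rw [eq_div_iff hn2, mul_comm]; exact_mod_cast F4
  qify
  rw [d4]
  field_simp
  ring

lemma recurrence (n : ℕ) :
    ((n : ℤ) + 2) ^ 2 * zagierZ (n + 2)
      = 4 * (3 * (n : ℤ) ^ 2 + 9 * (n : ℤ) + 7) * zagierZ (n + 1)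
        - 32 * ((n : ℤ) + 1) ^ 2 * zagierZ n := by
  have tel : ∑ j ∈ Finset.range (n + 1), (Gc n (j + 1) - Gc n j) = Gc n (n + 1) - Gc n 0 :=
    Finset.sum_range_sub (Gc n) (n + 1)
  have hsum : ∑ j ∈ Finset.range (n + 1),
      (((n : ℤ) + 2) ^ 2 * Zt (n + 2) j - 4 * (3 * (n : ℤ) ^ 2 + 9 * (n : ℤ) + 7) * Zt (n + 1) j
        + 32 * ((n : ℤ) + 1) ^ 2 * Zt n j) = Gc n (n + 1) := by
    rw [Finset.sum_congr rfl fun j hj => step n j (by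
      have := Finset.mem_range.mp hj; omega), tel, Gc_zero, sub_zero]
  rw [Finset.sum_add_distrib, Finset.sum_sub_distrib, ← Finset.mul_sum, ← Finset.mul_sum,
    ← Finset.mul_sum] at hsum
  have e2 : zagierZ (n + 2) = (∑ j ∈ Finset.range (n + 1), Zt (n + 2) j)
      + Zt (n + 2) (n + 1) + Zt (n + 2) (n + 2) := by
    rw [zagierZ_eq, show n + 2 + 1 = (n + 1) + 1 + 1 by omega, Finset.sum_range_succ,
      Finset.sum_range_succ]
  have e1 : zagierZ (n + 1) = (∑ j ∈ Finset.range (n + 1), Zt (n + 1) j) + Zt (n + 1) (n + 1) := by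
    rw [zagierZ_eq, Finset.sum_range_succ]
  have e0 : zagierZ n = ∑ j ∈ Finset.range (n + 1), Zt n j := zagierZ_eq n
  have hb := boundary n
  rw [e2, e1, e0]
  linear_combination hsum + hb

lemma natcast_ne_zero (p : ℕ) [Fact p.Prime] (a : ℕ) (h0 : 0 < a) (h1 : a < p) :
    ((a : ℕ) : ZMod p) ≠ 0 := by
  rw [Ne, ZMod.natCast_eq_zero_iff]
  intro hdvd
  have := Nat.le_of_dvd h0 hdvd
  omega

lemma choose_neg (p : ℕ) [Fact p.Prime] (r : ℕ) :
    ∀ j : ℕ, r + j ≤ p - 1 →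
      (((p - 1 - r).choose j : ℕ) : ZMod p) = (-1) ^ j * (((r + j).choose j : ℕ) : ZMod p) := by
  have hp2 : 2 ≤ p := (Fact.out : p.Prime).two_le
  intro j
  induction j with
  | zero => simp
  | succ j ih =>
    intro h
    have hij := ih (by omega)
    have key := Nat.choose_succ_right_eq (p - 1 - r) j
    have hsub : p - 1 - r - j = p - (1 + r + j) := by omega
    rw [hsub] at key
    have keyz : (((p - 1 - r).choose (j + 1) : ℕ) : ZMod p) * ((j + 1 : ℕ) : ZMod p)
        = (((p - 1 - r).choose j : ℕ) : ZMod p) * ((p - (1 + r + j) : ℕ) : ZMod p) := by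
      exact_mod_cast congrArg (Nat.cast : ℕ → ZMod p) key
    have c1 : ((p - (1 + r + j) : ℕ) : ZMod p) = -(((1 + r + j : ℕ) : ZMod p)) := by
      rw [Nat.cast_sub (by omega : 1 + r + j ≤ p), ZMod.natCast_self, zero_sub]
    rw [c1, hij] at keyz
    have hstep := Nat.add_one_mul_choose_eq (r + j) j
    have hstepz : ((r + j + 1 : ℕ) : ZMod p) * (((r + j).choose j : ℕ) : ZMod p)
        = (((r + j + 1).choose (j + 1) : ℕ) : ZMod p) * ((j + 1 : ℕ) : ZMod p) := by
      exact_mod_cast congrArg (Nat.cast : ℕ → ZMod p) hstep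
    have hj1 : ((j + 1 : ℕ) : ZMod p) ≠ 0 := natcast_ne_zero p (j + 1) (by omega) (by omega)
    apply mul_right_cancel₀ hj1
    rw [show r + (j + 1) = r + j + 1 by omega]
    push_cast at keyz hstepz ⊢
    linear_combination keyz + (-1 : ZMod p) ^ (j + 1) * hstepz
  
lemma central_vanish (p : ℕ) [Fact p.Prime] (j : ℕ) (h1 : j < p) (h2 : p ≤ 2 * j) :
    (((2 * j).choose j : ℕ) : ZMod p) = 0 := by
  rw [ZMod.natCast_eq_zero_iff]
  have := Nat.Prime.dvd_choose_add (Fact.out : p.Prime) h1 h1 (by omega)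
  rwa [← two_mul] at this

lemma zag_p1 (p m : ℕ) [Fact p.Prime] (hm : p = 2 * m + 1) :
    ((zagierZ (p - 1) : ℤ) : ZMod p) = (-1) ^ m := by
  have hz : ((zagierZ (p - 1) : ℤ) : ZMod p) = ∑ j ∈ Finset.range (2 * m + 1),
      (((2 * m).choose j : ℕ) : ZMod p) * (((2 * j).choose j : ℕ) : ZMod p)
        * (((2 * (2 * m - j)).choose (2 * m - j) : ℕ) : ZMod p) := by
    rw [show p - 1 = 2 * m by omega]
    simp only [zagierZ]
    push_cast
    norm_num
  rw [hz]
  have hval : ∀ b ∈ Finset.range (2 * m + 1), b ≠ m →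
      (((2 * m).choose b : ℕ) : ZMod p) * (((2 * b).choose b : ℕ) : ZMod p)
        * (((2 * (2 * m - b)).choose (2 * m - b) : ℕ) : ZMod p) = 0 := by
    intro b hb hbm
    have hble := Finset.mem_range.mp hb
    rcases lt_or_gt_of_ne hbm with hlt | hgt
    · have hv : (((2 * (2 * m - b)).choose (2 * m - b) : ℕ) : ZMod p) = 0 :=
        central_vanish p (2 * m - b) (by omega) (by omega)
      rw [hv, mul_zero]
    · have hv : (((2 * b).choose b : ℕ) : ZMod p) = 0 :=
        central_vanish p b (by omega) (by omega)
      rw [hv, mul_zero, zero_mul]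
  rw [Finset.sum_eq_single_of_mem m (by simp; omega) hval]
  have hsub : 2 * m - m = m := by omega
  rw [hsub]
  have hc : (((2 * m).choose m : ℕ) : ZMod p) = (-1) ^ m := by
    have := choose_neg p 0 m (by omega)
    simpa [show p - 1 - 0 = 2 * m by omega] using this
  rw [hc]
  have sq : ((-1 : ZMod p)) ^ m * (-1) ^ m = 1 := by
    rw [← pow_add]; exact Even.neg_one_pow ⟨m, rfl⟩
  linear_combination ((-1 : ZMod p) ^ m) * sq

lemma zag_p2 (p t : ℕ) [Fact p.Prime] (ht : p = 2 * t + 3) :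
    8 * ((zagierZ (p - 2) : ℤ) : ZMod p) = (-1) ^ (t + 1) := by
  have hz : ((zagierZ (p - 2) : ℤ) : ZMod p) = ∑ j ∈ Finset.range (2 * t + 2),
      (((2 * t + 1).choose j : ℕ) : ZMod p) * (((2 * j).choose j : ℕ) : ZMod p)
        * (((2 * (2 * t + 1 - j)).choose (2 * t + 1 - j) : ℕ) : ZMod p) := by
    rw [show p - 2 = 2 * t + 1 by omega]
    simp only [zagierZ, show 2 * t + 1 + 1 = 2 * t + 2 by omega]
    push_cast
    norm_num
  have hval : ∀ b ∈ (Finset.range (2 * t + 2)).erase (t + 1), b ≠ t →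
      (((2 * t + 1).choose b : ℕ) : ZMod p) * (((2 * b).choose b : ℕ) : ZMod p)
        * (((2 * (2 * t + 1 - b)).choose (2 * t + 1 - b) : ℕ) : ZMod p) = 0 := by
    intro b hb hbt
    have hb1 := Finset.mem_erase.mp hb
    have hble := Finset.mem_range.mp hb1.2
    rcases lt_or_gt_of_ne hbt with hlt | hgt
    · have hv : (((2 * (2 * t + 1 - b)).choose (2 * t + 1 - b) : ℕ) : ZMod p) = 0 :=
        central_vanish p (2 * t + 1 - b) (by omega) (by omega)
      rw [hv, mul_zero]
    · have hv : (((2 * b).choose b : ℕ) : ZMod p) = 0 :=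
        central_vanish p b (by omega) (by omega)
      rw [hv, mul_zero, zero_mul]
  have hmem : t + 1 ∈ Finset.range (2 * t + 2) := by simp; omega
  have e1 := Finset.sum_erase_add (Finset.range (2 * t + 2))
    (fun j => (((2 * t + 1).choose j : ℕ) : ZMod p) * (((2 * j).choose j : ℕ) : ZMod p)
        * (((2 * (2 * t + 1 - j)).choose (2 * t + 1 - j) : ℕ) : ZMod p)) hmem
  have e2 : ∑ j ∈ (Finset.range (2 * t + 2)).erase (t + 1),
      (((2 * t + 1).choose j : ℕ) : ZMod p) * (((2 * j).choose j : ℕ) : ZMod p)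
        * (((2 * (2 * t + 1 - j)).choose (2 * t + 1 - j) : ℕ) : ZMod p)
      = (((2 * t + 1).choose t : ℕ) : ZMod p) * (((2 * t).choose t : ℕ) : ZMod p)
        * (((2 * (2 * t + 1 - t)).choose (2 * t + 1 - t) : ℕ) : ZMod p) :=
    Finset.sum_eq_single_of_mem t (by rw [Finset.mem_erase]; constructor <;> [omega; (simp; omega)]) hval
  rw [hz, ← e1, e2]
  beta_reduce
  have s1 : 2 * t + 1 - t = t + 1 := by omega
  have s2 : 2 * t + 1 - (t + 1) = t := by omega
  rw [s1, s2]
  -- casts of the four binomials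
  have hA : (((2 * t + 1).choose t : ℕ) : ZMod p) = (-1) ^ t * ((t : ZMod p) + 1) := by
    have := choose_neg p 1 t (by omega)
    rw [show p - 1 - 1 = 2 * t + 1 by omega, show (1 + t).choose t = t + 1 by
      rw [Nat.add_comm]; exact Nat.choose_succ_self_right t] at this
    rw [this]; push_cast; ring
  have hA2 : (((2 * t + 1).choose (t + 1) : ℕ) : ZMod p) = (-1) ^ (t + 1) * ((t : ZMod p) + 2) := by
    have := choose_neg p 1 (t + 1) (by omega)
    rw [show p - 1 - 1 = 2 * t + 1 by omega, show (1 + (t + 1)).choose (t + 1) = t + 2 by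
      rw [Nat.add_comm]; exact Nat.choose_succ_self_right (t + 1)] at this
    rw [this]; push_cast; ring
  have hC : (((2 * (t + 1)).choose (t + 1) : ℕ) : ZMod p) = (-1) ^ (t + 1) := by
    have := choose_neg p 0 (t + 1) (by omega)
    rw [show p - 1 - 0 = 2 * (t + 1) by omega] at this
    simpa using this
  have hB : (((2 * t).choose t : ℕ) : ZMod p) = (-1) ^ t * (((2 + t).choose t : ℕ) : ZMod p) := by
    have := choose_neg p 2 t (by omega)
    rwa [show p - 1 - 2 = 2 * t by omega] at this
  rw [hA, hA2, hB, hC]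
  -- key: 8 * ((2+t).choose t) = 4*(t+2)*(t+1) ≡ -1
  have hK : 2 * ((2 + t).choose t) = (t + 2) * (t + 1) := by
    have h1 := Nat.add_one_mul_choose_eq (t + 1) 1
    simp only [Nat.succ_eq_add_one, Nat.choose_one_right] at h1
    have h2 : (2 + t).choose t = (t + 1 + 1).choose (1 + 1) := by
      rw [show 2 + t = t + 1 + 1 by omega]
      have h3 := Nat.choose_symm (by omega : 2 ≤ t + 1 + 1)
      rw [show t + 1 + 1 - 2 = t by omega] at h3
      rw [← h3]
    rw [h2]
    nlinarith [h1]
  have hKz : 2 * (((2 + t).choose t : ℕ) : ZMod p) = ((t : ZMod p) + 2) * ((t : ZMod p) + 1) := by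
    exact_mod_cast congrArg (Nat.cast : ℕ → ZMod p) hK
  have hp0 : (2 * (t : ZMod p) + 3) = 0 := by
    have : ((2 * t + 3 : ℕ) : ZMod p) = 0 := by rw [← ht]; exact ZMod.natCast_self p
    push_cast at this; linear_combination this
  have sq : ((-1 : ZMod p)) ^ t * (-1) ^ t = 1 := by
    rw [← pow_add]; exact Even.neg_one_pow ⟨t, rfl⟩
  -- final algebra
  linear_combination (4 * ((-1 : ZMod p) ^ t) ^ 3) * hKz
    + (((-1 : ZMod p) ^ t) ^ 3 * (2 * (t : ZMod p) + 3)) * hp0 - ((-1 : ZMod p) ^ t) * sq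

end ZagierAux

open ZagierAux in
theorem stmt_17 (p : ℕ) [Fact p.Prime] (hp : Odd p) (k : ℕ) (hk : k < p) :
    zagierZ k ≡ legendreSym p (-1) * 32 ^ k * zagierZ (p - 1 - k) [ZMOD (p : ℤ)] := by
  obtain ⟨m, hm⟩ := hp
  have hprime : p.Prime := Fact.out
  have hm1 : 1 ≤ m := by have := hprime.two_le; omega
  have main : ∀ k, k ≤ p - 1 →
      ((zagierZ k : ℤ) : ZMod p) = (-1) ^ m * 32 ^ k * ((zagierZ (p - 1 - k) : ℤ) : ZMod p) := by
    intro k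
    induction k using Nat.strong_induction_on with
    | _ k ih =>
      intro hkle
      rcases k with _ | k
      · -- k = 0
        have hz0 : zagierZ 0 = 1 := by norm_num [zagierZ]
        rw [hz0, Nat.sub_zero, zag_p1 p m hm]
        have sq : ((-1 : ZMod p)) ^ m * (-1) ^ m = 1 := by
          rw [← pow_add]; exact Even.neg_one_pow ⟨m, rfl⟩
        push_cast
        linear_combination -sq
      rcases k with _ | j
      · -- k = 1
        have hz1 : zagierZ 1 = 4 := by norm_num [zagierZ, Finset.sum_range_succ]
        obtain ⟨t, rfl⟩ : ∃ t, m = t + 1 := ⟨m - 1, by omega⟩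
        rw [hz1, show p - 1 - 1 = p - 2 by omega]
        have h2 := zag_p2 p t (by omega)
        have sq : ((-1 : ZMod p)) ^ (t + 1) * (-1) ^ (t + 1) = 1 := by
          rw [← pow_add]; exact Even.neg_one_pow ⟨t + 1, by ring⟩
        push_cast
        linear_combination (-4 * (-1 : ZMod p) ^ (t + 1)) * h2 - 4 * sq
      · -- k = j + 2
        rw [show j + 1 + 1 = j + 2 by omega] at hkle ⊢
        have ihj := ih j (by omega) (by omega)
        have ihj1 := ih (j + 1) (by omega) (by omega)
        set q := p - 1 - (j + 2) with hqdef
        have hq2 : p - 1 - j = q + 2 := by omega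
        have hq1 : p - 1 - (j + 1) = q + 1 := by omega
        rw [hq2] at ihj
        rw [hq1] at ihj1
        have R1 := congrArg (fun z : ℤ => (z : ZMod p)) (recurrence j)
        have R2 := congrArg (fun z : ℤ => (z : ZMod p)) (recurrence q)
        push_cast at R1 R2
        have hqcast : ((q : ℕ) : ZMod p) = -(((j : ℕ) : ZMod p) + 3) := by
          have h0 : ((q + (j + 3) : ℕ) : ZMod p) = 0 := by
            rw [show q + (j + 3) = p by omega]; exact ZMod.natCast_self p
          push_cast at h0
          linear_combination h0
        rw [hqcast] at R2
        have hne : (((j : ℕ) : ZMod p) + 2) ≠ 0 := by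
          have h := natcast_ne_zero p (j + 2) (by omega) (by omega)
          push_cast at h
          exact h
        apply mul_left_cancel₀ (pow_ne_zero 2 hne)
        linear_combination R1 + 4 * (3 * ((j : ℕ) : ZMod p) ^ 2 + 9 * ((j : ℕ) : ZMod p) + 7) * ihj1
          - 32 * (((j : ℕ) : ZMod p) + 1) ^ 2 * ihj
          - (-1 : ZMod p) ^ m * 32 ^ (j + 1) * R2
  rw [← ZMod.intCast_eq_intCast_iff]
  push_cast
  have hleg : ((legendreSym p (-1) : ℤ) : ZMod p) = (-1 : ZMod p) ^ m := by
    rw [legendreSym.eq_pow]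
    push_cast
    rw [show p / 2 = m by omega]
  rw [hleg]
  exact main k (by omega)
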